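/- Every scattered q-polynomial f ∈ L_{k,q} is a Sidon space polynomial, i.e., for all x_0, x_1 ∈ F_{q^k} that are not F_q-proportional, S_{x_0,f} ∩ S_{x_1,f} = F_q, where S_{x,f} = {λ ∈ F_{q^k} : f(λx) = λ f(x)}. -/
import Mathlib


/-- The multiplicative coset `a·F_q` inside `L`. -/
def qcoset (K : Type*) {L : Type*} [Field K] [Field L] [Algebra K L] (a : L) : Set L :=
  Set.range fun x : K => algebraMap K L x * a

/-- `V ⊆ L` is a Sidon space (as a set): for nonzero `a,b,c,d ∈ V` with `ab = cd`
we have `{aF_q, bF_q} = {cF_q, dF_q}`. -/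
def IsSidonSet (K : Type*) {L : Type*} [Field K] [Field L] [Algebra K L] (V : Set L) : Prop :=
  ∀ a ∈ V, ∀ b ∈ V, ∀ c ∈ V, ∀ d ∈ V,
    a ≠ 0 → b ≠ 0 → c ≠ 0 → d ≠ 0 → a * b = c * d →
      ({qcoset K a, qcoset K b} : Set (Set L)) = {qcoset K c, qcoset K d}

/-- `f` is scattered: `f(a)/a = f(b)/b` for nonzero `a,b` forces `F_q`-proportionality. -/
def IsScattered (K : Type*) {M : Type*} [Field K] [Field M] [Algebra K M] (f : M → M) : Prop :=
  ∀ a b : M, a ≠ 0 → b ≠ 0 → f a * b = f b * a → ∃ c : K, b = algebraMap K M c * a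

/-- `f` is a Sidon space polynomial: `S_{x₀,f} ∩ S_{x₁,f} = F_q` for all
non-`F_q`-proportional `x₀, x₁`. -/
def IsSidonPoly (K : Type*) {M : Type*} [Field K] [Field M] [Algebra K M] (f : M → M) : Prop :=
  ∀ x₀ x₁ : M,
    ¬ (∃ c : K, x₁ = algebraMap K M c * x₀ ∨ x₀ = algebraMap K M c * x₁) →
    {l : M | f (l * x₀) = l * f x₀} ∩ {l : M | f (l * x₁) = l * f x₁}
      = Set.range (algebraMap K M)

/-- every scattered `q`-polynomial is a Sidon space polynomial. -/
theorem stmt_6 {K M : Type*} [Field K] [Field M] [Algebra K M] [Fintype K] [Fintype M]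
    (f : M →ₗ[K] M) (hf : IsScattered K (⇑f)) :
    IsSidonPoly K (⇑f) := by
  intro x₀ x₁ hprop
  have hx₀ : x₀ ≠ 0 := by
    rintro rfl
    exact hprop ⟨0, Or.inr (by simp)⟩
  ext l
  constructor
  · rintro ⟨h0, _⟩
    rcases eq_or_ne l 0 with rfl | hl
    · exact ⟨0, by simp⟩
    · have hlx : l * x₀ ≠ 0 := mul_ne_zero hl hx₀
      have heq : f x₀ * (l * x₀) = f (l * x₀) * x₀ := by
        rw [h0]; ring
      obtain ⟨c, hc⟩ := hf x₀ (l * x₀) hx₀ hlx heq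
      refine ⟨c, ?_⟩
      have := mul_right_cancel₀ hx₀ hc
      exact this.symm ▸ rfl
  · rintro ⟨c, rfl⟩
    constructor <;>
      simp only [Set.mem_setOf_eq, ← Algebra.smul_def, smul_mul_assoc, map_smul]
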